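/- Let L be an even lattice all of whose elementary divisors are powers of a prime ℓ, let r be its rank and e(L) the sum of its elementary divisors, and let d be its determinant. If d is a perfect square then e(L)/2 ≡ r/2 mod (ℓ-1), and otherwise e(L)/2 ≡ (r + ℓ - 1)/2 mod (ℓ-1). -/

import Mathlib

open Matrix Finset

/-- `ℓ^a ≡ 1 + a*(ℓ-1) mod 2(ℓ-1)` for odd `ℓ`. -/
lemma pow_modeq_aux (ℓ : ℕ) (hodd : Odd ℓ) (a : ℕ) :
    ((ℓ : ℤ)) ^ a ≡ 1 + (a : ℤ) * ((ℓ : ℤ) - 1) [ZMOD (2 * ((ℓ : ℤ) - 1))] := by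
  obtain ⟨s, hs⟩ := hodd
  have hℓ : (ℓ : ℤ) = 2 * s + 1 := by exact_mod_cast hs
  induction a with
  | zero => simp
  | succ n ih =>
      push_cast
      calc (ℓ : ℤ) ^ (n + 1) = (ℓ : ℤ) * (ℓ : ℤ) ^ n := by ring
        _ ≡ (ℓ : ℤ) * (1 + (n : ℤ) * ((ℓ : ℤ) - 1)) [ZMOD (2 * ((ℓ : ℤ) - 1))] :=
            ih.mul_left _
        _ ≡ 1 + ((n : ℤ) + 1) * ((ℓ : ℤ) - 1) [ZMOD (2 * ((ℓ : ℤ) - 1))] :=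
            Int.ModEq.symm (Int.modEq_iff_dvd.mpr ⟨(n : ℤ) * s, by rw [hℓ]; ring⟩)

/-- A power of a prime is a square in `ℤ` iff the exponent is even. -/
lemma isSquare_prime_pow_iff (ℓ : ℕ) (hℓ : ℓ.Prime) (k : ℕ) :
    IsSquare ((ℓ : ℤ) ^ k) ↔ Even k := by
  constructor
  · rintro ⟨a, ha⟩
    have hn : ℓ ^ k = a.natAbs * a.natAbs := by
      have := congrArg Int.natAbs ha
      simpa [Int.natAbs_mul, Int.natAbs_pow] using this
    have h0 : a.natAbs ≠ 0 := by
      intro h; rw [h] at hn; simp at hn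
      exact hℓ.ne_zero hn.1
    have hf := congrArg (fun m => m.factorization ℓ) hn
    simp only [Nat.Prime.factorization_pow hℓ, Nat.factorization_mul h0 h0,
      Finsupp.coe_add, Pi.add_apply, Finsupp.single_eq_same] at hf
    exact ⟨a.natAbs.factorization ℓ, hf⟩
  · rintro ⟨t, ht⟩
    exact ⟨(ℓ : ℤ) ^ t, by rw [ht]; ring⟩

/-- Congruences can be summed over a finite set. -/
lemma modEq_sum_aux {ι : Type*} {n : ℤ} (s : Finset ι) {f g : ι → ℤ}
    (h : ∀ i ∈ s, f i ≡ g i [ZMOD n]) :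
    (∑ i ∈ s, f i) ≡ (∑ i ∈ s, g i) [ZMOD n] := by
  induction s using Finset.cons_induction with
  | empty => simp
  | cons a s ha ih =>
      rw [Finset.sum_cons, Finset.sum_cons]
      exact (h a (Finset.mem_cons_self a s)).add
        (ih fun i hi => h i (Finset.mem_cons.mpr (Or.inr hi)))

/-- The determinant of an integral positive definite symmetric matrix is nonnegative
(via passing to `ℝ` by density of the rationals). -/
lemma det_nonneg_of_posdef (r : ℕ) (G : Matrix (Fin r) (Fin r) ℤ)
    (hsymm : G.IsSymm)
    (hpos : ∀ v : Fin r → ℤ, v ≠ 0 → 0 < dotProduct v (G.mulVec v)) :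
    0 ≤ G.det := by
  set Gℝ : Matrix (Fin r) (Fin r) ℝ := G.map (Int.castRingHom ℝ) with hGℝ
  -- nonnegativity over ℚ
  have hQQ : ∀ q : Fin r → ℚ,
      0 ≤ dotProduct q ((G.map (Int.castRingHom ℚ)).mulVec q) := by
    intro q
    by_cases hq : q = 0
    · simp [hq]
    · set N : ℕ := ∏ i, (q i).den with hN
      have hNpos : 0 < N := Finset.prod_pos fun i _ => (q i).pos
      set v : Fin r → ℤ := fun i => (q i).num * ((N / (q i).den : ℕ) : ℤ) with hv
      have hvq : ∀ i, (v i : ℚ) = q i * N := by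
        intro i
        have hd : (q i).den ∣ N := Finset.dvd_prod_of_mem _ (Finset.mem_univ i)
        have hden : ((q i).den : ℚ) ≠ 0 := by exact_mod_cast (q i).den_nz
        have hcd : ((N / (q i).den : ℕ) : ℚ) = (N : ℚ) / ((q i).den : ℚ) :=
          Nat.cast_div hd hden
        have h3 : q i * ((q i).den : ℚ) = ((q i).num : ℚ) := by
          exact Rat.mul_den_eq_num (q i)
        rw [hv, Int.cast_mul, Int.cast_natCast, hcd, mul_div_assoc',
          div_eq_iff hden, ← h3]
        ring
      have hv0 : v ≠ 0 := by
        intro h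
        apply hq
        funext i
        have : (v i : ℚ) = 0 := by rw [h]; simp
        rw [hvq i] at this
        have hNne : (N : ℚ) ≠ 0 := by exact_mod_cast hNpos.ne'
        simpa [hNne] using this
      have hkey : ((dotProduct v (G.mulVec v) : ℤ) : ℚ)
          = (N : ℚ) ^ 2 * dotProduct q ((G.map (Int.castRingHom ℚ)).mulVec q) := by
        simp only [dotProduct, Matrix.mulVec, Matrix.map_apply]
        push_cast
        rw [Finset.mul_sum]
        refine Finset.sum_congr rfl fun i _ => ?_
        rw [hvq i, Finset.mul_sum, Finset.mul_sum, Finset.mul_sum]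
        refine Finset.sum_congr rfl fun j _ => ?_
        rw [hvq j, eq_intCast]
        ring
      have hposq : (0 : ℚ) < ((dotProduct v (G.mulVec v) : ℤ) : ℚ) := by
        exact_mod_cast hpos v hv0
      rw [hkey] at hposq
      have hN2 : (0 : ℚ) < (N : ℚ) ^ 2 := by positivity
      nlinarith
  -- nonnegativity over ℝ by density
  have hcont : Continuous fun x : Fin r → ℝ => dotProduct x (Gℝ.mulVec x) := by
    simp only [dotProduct, Matrix.mulVec]
    exact continuous_finset_sum _ fun i _ =>
      (continuous_apply i).mul (continuous_finset_sum _ fun j _ =>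
        continuous_const.mul (continuous_apply j))
  have hclosed : IsClosed {x : Fin r → ℝ | 0 ≤ dotProduct x (Gℝ.mulVec x)} :=
    isClosed_le continuous_const hcont
  have hdense : Dense (Set.pi Set.univ fun _ : Fin r => Set.range ((↑) : ℚ → ℝ)) :=
    dense_pi _ fun i _ => Rat.denseRange_cast
  have hsub : (Set.pi Set.univ fun _ : Fin r => Set.range ((↑) : ℚ → ℝ))
      ⊆ {x : Fin r → ℝ | 0 ≤ dotProduct x (Gℝ.mulVec x)} := by
    intro x hx
    choose q hq using fun i => hx i (Set.mem_univ i)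
    have hxq : x = fun i => ((q i : ℝ)) := funext fun i => (hq i).symm
    have hcast : dotProduct x (Gℝ.mulVec x)
        = ((dotProduct q ((G.map (Int.castRingHom ℚ)).mulVec q) : ℚ) : ℝ) := by
      rw [hxq]
      simp only [dotProduct, Matrix.mulVec, Matrix.map_apply, hGℝ]
      push_cast
      rfl
    show (0 : ℝ) ≤ _
    rw [hcast]
    exact_mod_cast hQQ q
  have hQR : ∀ x : Fin r → ℝ, 0 ≤ dotProduct x (Gℝ.mulVec x) := by
    intro x
    have : closure (Set.pi Set.univ fun _ : Fin r => Set.range ((↑) : ℚ → ℝ))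
        ⊆ {x : Fin r → ℝ | 0 ≤ dotProduct x (Gℝ.mulVec x)} :=
      hclosed.closure_subset_iff.mpr hsub
    rw [hdense.closure_eq] at this
    exact this (Set.mem_univ x)
  -- positive semidefiniteness over ℝ, hence nonnegative determinant
  have hherm : Gℝ.IsHermitian := by
    rw [Matrix.IsHermitian, Matrix.conjTranspose_eq_transpose_of_trivial]
    exact (hsymm.map _)
  have hsd : Gℝ.PosSemidef := by
    refine Matrix.posSemidef_iff_dotProduct_mulVec.mpr ⟨hherm, fun x => ?_⟩
    simpa using hQR x
  have hdetR : 0 ≤ Gℝ.det := by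
    rw [hherm.det_eq_prod_eigenvalues]
    exact Finset.prod_nonneg fun i _ => by
      exact_mod_cast hsd.eigenvalues_nonneg i
  have : ((G.det : ℤ) : ℝ) = Gℝ.det := RingHom.map_det (Int.castRingHom ℝ) G
  rw [← this] at hdetR
  exact_mod_cast hdetR

/-- For an even lattice (given by a Gram matrix `G`) whose elementary divisors
are the prime powers `ℓ ^ α i`, with rank `r`, determinant `d = det G` and
`e = Σ ℓ ^ α i` the sum of the elementary divisors: if `d` is a perfect square then
`e/2 ≡ r/2 (mod ℓ-1)`, otherwise `e/2 ≡ (r + ℓ - 1)/2 (mod ℓ-1)`.  Since `e` and `r`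
are even, these congruences are stated in the equivalent form
`e ≡ r (mod 2(ℓ-1))`, resp. `e ≡ r + ℓ - 1 (mod 2(ℓ-1))`. -/
theorem sum_elementary_divisors_mod
    (ℓ : ℕ) (hℓ : ℓ.Prime) (hodd : Odd ℓ)
    (r : ℕ) (α : Fin r → ℕ)
    (G : Matrix (Fin r) (Fin r) ℤ)
    (hsymm : G.IsSymm)
    (hpos : ∀ v : Fin r → ℤ, v ≠ 0 → 0 < dotProduct v (G.mulVec v))
    (heven : ∀ i, 2 ∣ G i i)
    (hsmith : ∃ U W : Matrix (Fin r) (Fin r) ℤ, IsUnit U.det ∧ IsUnit W.det ∧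
      U * G * W = Matrix.diagonal fun i => (ℓ : ℤ) ^ α i) :
    (IsSquare G.det →
      ((∑ i, ℓ ^ α i : ℕ) : ℤ) ≡ (r : ℤ) [ZMOD (2 * ((ℓ : ℤ) - 1))]) ∧
    (¬ IsSquare G.det →
      ((∑ i, ℓ ^ α i : ℕ) : ℤ) ≡ (r : ℤ) + (ℓ : ℤ) - 1 [ZMOD (2 * ((ℓ : ℤ) - 1))]) := by
  have hdetpos : 0 ≤ G.det := det_nonneg_of_posdef r G hsymm hpos
  obtain ⟨U, W, hU, hW, hUW⟩ := hsmith
  set k : ℕ := ∑ i, α i with hk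
  -- det G = ℓ ^ k
  have hdetmul : U.det * G.det * W.det = (ℓ : ℤ) ^ k := by
    rw [← Matrix.det_mul, ← Matrix.det_mul, hUW, Matrix.det_diagonal,
      Finset.prod_pow_eq_pow_sum]
  have hlk : (0 : ℤ) < (ℓ : ℤ) ^ k := pow_pos (by exact_mod_cast hℓ.pos) k
  have hdet : G.det = (ℓ : ℤ) ^ k := by
    rcases Int.isUnit_iff.mp hU with h1 | h1 <;>
      rcases Int.isUnit_iff.mp hW with h2 | h2 <;>
      rw [h1, h2] at hdetmul <;> linarith
  -- square iff k even
  have hsq : IsSquare G.det ↔ Even k := by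
    rw [hdet]; exact isSquare_prime_pow_iff ℓ hℓ k
  -- congruence e ≡ r + k*(ℓ-1)
  have hcong : ((∑ i, ℓ ^ α i : ℕ) : ℤ)
      ≡ (r : ℤ) + (k : ℤ) * ((ℓ : ℤ) - 1) [ZMOD (2 * ((ℓ : ℤ) - 1))] := by
    have h1 : ((∑ i, ℓ ^ α i : ℕ) : ℤ) = ∑ i, ((ℓ : ℤ)) ^ α i := by push_cast; rfl
    have h2 : (r : ℤ) + (k : ℤ) * ((ℓ : ℤ) - 1)
        = ∑ i : Fin r, (1 + (α i : ℤ) * ((ℓ : ℤ) - 1)) := by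
      rw [Finset.sum_add_distrib, ← Finset.sum_mul]
      push_cast [hk]
      simp
    rw [h1, h2]
    exact modEq_sum_aux _ fun i _ => pow_modeq_aux ℓ hodd (α i)
  constructor
  · intro hs
    obtain ⟨t, ht⟩ := hsq.mp hs
    refine hcong.trans (Int.modEq_iff_dvd.mpr ⟨-t, ?_⟩)
    have : (k : ℤ) = 2 * t := by exact_mod_cast (by omega : k = 2 * t)
    rw [this]; ring
  · intro hs
    have hko : Odd k := by
      rcases Nat.even_or_odd k with h | h
      · exact absurd (hsq.mpr h) hs
      · exact h
    obtain ⟨t, ht⟩ := hko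
    refine hcong.trans (Int.modEq_iff_dvd.mpr ⟨-t, ?_⟩)
    have : (k : ℤ) = 2 * t + 1 := by exact_mod_cast ht
    rw [this]; ring
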